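/- Let A be an m×N matrix with rational entries, let C = {x ∈ ℝ^N : x_i ≥ 0 for all i and Ax = 0}, and let f : ℝ^N → ℝ be a linear functional. Suppose v ∈ C ∩ ℤ^N is a nonzero integer vector with f(v) > 0, and that there is no integer vector w ∈ C ∩ ℤ^N with f(w) > 0 whose support is strictly contained in the support of v. Let d be the greatest common divisor of the coordinates of v and let u = (1/d)·v (the smallest positive rational multiple of v all of whose coordinates are integers). Then u ∈ C ∩ ℤ^N, f(u) > 0, and u cannot be written as u = x + y with x, y ∈ C ∩ ℤ^N both nonzero. -/

import Mathlib

def coneQ {m N : ℕ} (A : Matrix (Fin m) (Fin N) ℚ) (w : Fin N → ℚ) : Prop :=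
  (∀ i, 0 ≤ w i) ∧ A.mulVec w = 0

lemma castR_mulVec {m N : ℕ} (A : Matrix (Fin m) (Fin N) ℚ) (w : Fin N → ℚ) (j : Fin m) :
    (A.map ((↑) : ℚ → ℝ)).mulVec (fun i => (w i : ℝ)) j = ((A.mulVec w j : ℚ) : ℝ) := by
  simp [Matrix.mulVec, dotProduct, Matrix.map_apply]

lemma memC_iff {m N : ℕ} (A : Matrix (Fin m) (Fin N) ℚ) (w : Fin N → ℚ) :
    ((fun i => (w i : ℝ)) ∈ {x : Fin N → ℝ | (∀ i, 0 ≤ x i) ∧ (A.map ((↑) : ℚ → ℝ)).mulVec x = 0})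
      ↔ coneQ A w := by
  constructor
  · rintro ⟨h1, h2⟩
    refine ⟨fun i => by have := h1 i; simpa using this, ?_⟩
    funext j
    have := congrFun h2 j
    rw [castR_mulVec] at this
    simp only [Pi.zero_apply] at this ⊢
    exact_mod_cast this
  · rintro ⟨h1, h2⟩
    refine ⟨fun i => by have := h1 i; simpa using this, ?_⟩
    funext j
    rw [castR_mulVec, h2]
    simp

lemma peel {m N : ℕ} (A : Matrix (Fin m) (Fin N) ℚ) (a b : Fin N → ℚ)
    (ha : coneQ A a) (hb : coneQ A b) (hbne : b ≠ 0)
    (hsub : {i | b i ≠ 0} ⊆ {i | a i ≠ 0}) :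
    ∃ lam : ℚ, 0 < lam ∧ ∃ z : Fin N → ℚ, coneQ A z ∧
      {i | z i ≠ 0} ⊂ {i | a i ≠ 0} ∧ a = lam • b + z := by
  classical
  have hbex : ∃ i, b i ≠ 0 := Function.ne_iff.mp hbne
  set T : Finset (Fin N) := Finset.univ.filter (fun i => b i ≠ 0) with hT
  have hTne : T.Nonempty := by
    obtain ⟨i, hi⟩ := hbex
    exact ⟨i, by simp [hT, hi]⟩
  have hbpos : ∀ i ∈ T, 0 < b i := by
    intro i hi
    have : b i ≠ 0 := by simpa [hT] using hi
    exact lt_of_le_of_ne (hb.1 i) (Ne.symm this)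
  have hapos : ∀ i ∈ T, 0 < a i := by
    intro i hi
    have hbi : b i ≠ 0 := by simpa [hT] using hi
    exact lt_of_le_of_ne (ha.1 i) (Ne.symm (hsub hbi))
  set lam : ℚ := T.inf' hTne (fun i => a i / b i) with hlam
  have hlampos : 0 < lam := by
    rw [hlam, Finset.lt_inf'_iff]
    exact fun i hi => div_pos (hapos i hi) (hbpos i hi)
  refine ⟨lam, hlampos, a - lam • b, ⟨?_, ?_⟩, ?_, by ring⟩
  · intro i
    by_cases hi : i ∈ T
    · have h1 : lam ≤ a i / b i := Finset.inf'_le _ hi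
      have h2 : lam * b i ≤ a i := (le_div_iff₀ (hbpos i hi)).mp h1
      simpa [sub_nonneg] using h2
    · have hbi : b i = 0 := by simpa [hT] using hi
      simp [hbi, ha.1 i]
  · rw [Matrix.mulVec_sub, Matrix.mulVec_smul, ha.2, hb.2]
    simp
  · obtain ⟨i0, hi0T, hi0⟩ := Finset.exists_mem_eq_inf' hTne (fun i => a i / b i)
    have hbi0 : b i0 ≠ 0 := by simpa [hT] using hi0T
    have hz0 : a i0 - lam * b i0 = 0 := by
      rw [hlam, hi0]
      field_simp
      ring
    rw [Set.ssubset_iff_of_subset]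
    · exact ⟨i0, hsub hbi0, by simpa using hz0⟩
    · intro i hi
      simp only [Set.mem_setOf_eq] at hi ⊢
      intro hai
      apply hi
      have hbi : b i = 0 := by
        by_contra hbi
        exact hsub hbi hai
      simp [hai, hbi]

lemma ratScale {N : ℕ} (w : Fin N → ℚ) :
    ∃ n : ℕ, 0 < n ∧ ∃ W : Fin N → ℤ, ∀ i, (W i : ℚ) = n * w i := by
  classical
  refine ⟨∏ i, (w i).den, Finset.prod_pos (fun i _ => (w i).pos), ?_⟩
  have hdvd : ∀ i : Fin N, (w i).den ∣ ∏ j, (w j).den := fun i =>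
    Finset.dvd_prod_of_mem _ (Finset.mem_univ i)
  choose k hk using hdvd
  refine ⟨fun i => (w i).num * (k i), fun i => ?_⟩
  have hden : ((w i).den : ℚ) * w i = (w i).num := Rat.den_mul_eq_num (w i)
  have h1 : ((∏ j, (w j).den : ℕ) : ℚ) * w i = (k i) * (((w i).den : ℚ) * w i) := by
    rw_mod_cast [hk i]
    push_cast
    ring
  rw [h1, hden]
  push_cast
  ring

lemma noSmall {m N : ℕ} (A : Matrix (Fin m) (Fin N) ℚ)
    (C : Set (Fin N → ℝ))
    (hC : C = {x | (∀ i, 0 ≤ x i) ∧ (A.map ((↑) : ℚ → ℝ)).mulVec x = 0})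
    (f : (Fin N → ℝ) →ₗ[ℝ] ℝ) (v : Fin N → ℤ)
    (hmin : ¬ ∃ w : Fin N → ℤ, (fun i => (w i : ℝ)) ∈ C ∧
      0 < f (fun i => (w i : ℝ)) ∧ {i | w i ≠ 0} ⊂ {i | v i ≠ 0})
    (w : Fin N → ℚ) (hw : coneQ A w)
    (hsupp : {i | w i ≠ 0} ⊂ {i | v i ≠ 0})
    (hfw : 0 < f (fun i => (w i : ℝ))) : False := by
  obtain ⟨n, hn, W, hW⟩ := ratScale w
  have hWq : (fun i => ((W i : ℚ))) = (n : ℚ) • w := by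
    funext i; simp [hW i]
  have hWr : (fun i => ((W i : ℝ))) = (n : ℝ) • (fun i => ((w i : ℝ))) := by
    funext i
    have h := hW i
    have : ((W i : ℚ) : ℝ) = (((n : ℚ) * w i : ℚ) : ℝ) := by rw [h]
    push_cast at this
    simpa using this
  apply hmin
  refine ⟨W, ?_, ?_, ?_⟩
  · rw [hC]
    have hcone : coneQ A (fun i => ((W i : ℚ))) := by
      rw [hWq]
      constructor
      · intro i
        have : (0:ℚ) ≤ (n:ℚ) := by positivity
        exact smul_nonneg this (hw.1 i)
      · rw [Matrix.mulVec_smul, hw.2, smul_zero]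
    have := (memC_iff A (fun i => ((W i : ℚ)))).mpr hcone
    simpa using this
  · rw [hWr, map_smul]
    have hn' : (0 : ℝ) < n := by exact_mod_cast hn
    simpa using mul_pos hn' hfw
  · have : {i | W i ≠ 0} = {i | w i ≠ 0} := by
      ext i
      simp only [Set.mem_setOf_eq]
      constructor
      · intro h h0
        apply h
        have : (W i : ℚ) = 0 := by rw [hW i, h0, mul_zero]
        exact_mod_cast this
      · intro h h0
        apply h
        have : ((n : ℚ)) * w i = 0 := by rw [← hW i, h0]; simp
        rcases mul_eq_zero.mp this with h1 | h1
        · exact absurd h1 (by positivity)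
        · exact h1
    rw [this]
    exact hsupp

lemma multiple {m N : ℕ} (A : Matrix (Fin m) (Fin N) ℚ)
    (C : Set (Fin N → ℝ))
    (hC : C = {x | (∀ i, 0 ≤ x i) ∧ (A.map ((↑) : ℚ → ℝ)).mulVec x = 0})
    (f : (Fin N → ℝ) →ₗ[ℝ] ℝ)
    (v : Fin N → ℤ) (hvC : (fun i => (v i : ℝ)) ∈ C) (hvne : v ≠ 0)
    (hfv : 0 < f (fun i => (v i : ℝ)))
    (hmin : ¬ ∃ w : Fin N → ℤ, (fun i => (w i : ℝ)) ∈ C ∧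
      0 < f (fun i => (w i : ℝ)) ∧ {i | w i ≠ 0} ⊂ {i | v i ≠ 0})
    (w : Fin N → ℚ) (hw : coneQ A w) (hwne : w ≠ 0)
    (hsupp : {i | w i ≠ 0} ⊆ {i | v i ≠ 0}) :
    ∃ μ : ℚ, 0 < μ ∧ w = μ • (fun i => ((v i : ℚ))) := by
  classical
  set vq : Fin N → ℚ := fun i => ((v i : ℚ)) with hvqdef
  have hcastv : (fun i => ((vq i : ℝ))) = (fun i => ((v i : ℝ))) := by
    funext i; push_cast [hvqdef]; rfl
  have hvq : coneQ A vq := by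
    apply (memC_iff A vq).mp
    rw [hcastv, ← hC]
    exact hvC
  have suppvq : {i | vq i ≠ 0} = {i | v i ≠ 0} := by
    ext i; simp [hvqdef]
  have hvqne : vq ≠ 0 := by
    obtain ⟨i, hi⟩ := Function.ne_iff.mp hvne
    refine Function.ne_iff.mpr ⟨i, ?_⟩
    simp only [Pi.zero_apply] at hi ⊢
    simp only [hvqdef]
    exact_mod_cast hi
  have hfvq : 0 < f (fun i => ((vq i : ℝ))) := by rw [hcastv]; exact hfv
  have key : ∀ (a b z : Fin N → ℚ) (c : ℚ), a = c • b + z →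
      f (fun i => ((a i : ℝ))) = c * f (fun i => ((b i : ℝ))) + f (fun i => ((z i : ℝ))) := by
    intro a b z c h
    have h2 : (fun i => ((a i : ℝ))) =
        (c : ℝ) • (fun i => ((b i : ℝ))) + (fun i => ((z i : ℝ))) := by
      funext i
      rw [h]
      push_cast
      simp
    rw [h2, map_add, map_smul]
    simp
  have hsubw : {i | w i ≠ 0} ⊆ {i | vq i ≠ 0} := by rw [suppvq]; exact hsupp
  -- first peel : vq = lam • w + z
  obtain ⟨lam, hlam, z, hz, hzs, heq⟩ := peel A vq w hvq hw hwne hsubw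
  have hFeq := key vq w z lam heq
  by_cases hFw : f (fun i => ((w i : ℝ))) ≤ 0
  · exfalso
    apply noSmall A C hC f v hmin z hz (by rw [← suppvq]; exact hzs)
    have : lam * f (fun i => ((w i : ℝ))) ≤ 0 :=
      mul_nonpos_of_nonneg_of_nonpos (by exact_mod_cast hlam.le) hFw
    nlinarith [hfvq]
  · push_neg at hFw
    by_cases hwS : {i | w i ≠ 0} = {i | vq i ≠ 0}
    · -- reverse peel : w = μ • vq + z2
      obtain ⟨μ, hμ, z2, hz2, hz2s, heq2⟩ := peel A w vq hw hvq hvqne (by rw [hwS])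
      by_cases hz20 : z2 = 0
      · refine ⟨μ, hμ, ?_⟩
        rw [heq2, hz20, add_zero]
      · have hz2sub : {i | z2 i ≠ 0} ⊆ {i | vq i ≠ 0} := by
          rw [← hwS]; exact hz2s.subset
        have hFeq2 := key w vq z2 μ heq2
        by_cases hFz2 : 0 < f (fun i => ((z2 i : ℝ)))
        · exact absurd hFz2 (by
            exfalso
            apply noSmall A C hC f v hmin z2 hz2
              (by rw [← suppvq, ← hwS]; exact hz2s)
            exact hFz2)
        · push_neg at hFz2
          obtain ⟨l', hl', z3, hz3, hz3s, heq3⟩ := peel A vq z2 hvq hz2 hz20 hz2sub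
          have hFeq3 := key vq z2 z3 l' heq3
          exfalso
          apply noSmall A C hC f v hmin z3 hz3 (by rw [← suppvq]; exact hz3s)
          have : (l' : ℝ) * f (fun i => ((z2 i : ℝ))) ≤ 0 :=
            mul_nonpos_of_nonneg_of_nonpos (by exact_mod_cast hl'.le) hFz2
          nlinarith [hfvq]
    · exfalso
      exact noSmall A C hC f v hmin w hw
        (by rw [← suppvq]; exact HasSubset.Subset.ssubset_of_ne hsubw hwS) hFw


/-- If `v` is a nonzero integer vector in the cone `C` with `f v > 0`
and minimal support among such integer vectors, then `u = (1/d)·v` (where `d` is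
the gcd of the coordinates of `v`) lies in `C ∩ ℤ^N`, has `f u > 0`, and cannot be
written as a sum of two nonzero integer vectors in `C`. -/
theorem stmt_1 {m N : ℕ} (A : Matrix (Fin m) (Fin N) ℚ)
    (C : Set (Fin N → ℝ))
    (hC : C = {x | (∀ i, 0 ≤ x i) ∧ (A.map ((↑) : ℚ → ℝ)).mulVec x = 0})
    (f : (Fin N → ℝ) →ₗ[ℝ] ℝ)
    (v : Fin N → ℤ) (hvC : (fun i => (v i : ℝ)) ∈ C) (hvne : v ≠ 0)
    (hfv : 0 < f (fun i => (v i : ℝ)))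
    (hmin : ¬ ∃ w : Fin N → ℤ, (fun i => (w i : ℝ)) ∈ C ∧
      0 < f (fun i => (w i : ℝ)) ∧ {i | w i ≠ 0} ⊂ {i | v i ≠ 0})
    (d : ℕ) (hd : d = Finset.univ.gcd (fun i => (v i).natAbs))
    (u : Fin N → ℝ) (hu : u = ((d : ℝ))⁻¹ • (fun i => (v i : ℝ))) :
    u ∈ C ∧ (∀ i, ∃ z : ℤ, u i = (z : ℝ)) ∧ 0 < f u ∧
      ¬ ∃ x y : Fin N → ℝ, x ∈ C ∧ y ∈ C ∧
        (∀ i, ∃ z : ℤ, x i = (z : ℝ)) ∧ (∀ i, ∃ z : ℤ, y i = (z : ℝ)) ∧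
        x ≠ 0 ∧ y ≠ 0 ∧ u = x + y := by
  classical
  have dpos : 0 < d := by
    rcases Nat.eq_zero_or_pos d with h0 | h
    · exfalso
      apply hvne
      funext i
      have := Finset.gcd_eq_zero_iff.mp (h0 ▸ hd).symm i (Finset.mem_univ i)
      simpa [Int.natAbs_eq_zero] using this
    · exact h
  have hdR : ((d : ℝ)) ≠ 0 := by positivity
  have hdvd : ∀ i, (d : ℤ) ∣ v i := by
    intro i
    have h1 : d ∣ (v i).natAbs := hd ▸ Finset.gcd_dvd (Finset.mem_univ i)
    exact dvd_trans (Int.natCast_dvd_natCast.mpr h1) (Int.natAbs_dvd.mpr dvd_rfl)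
  have hvC' := hC ▸ hvC
  obtain ⟨hvnn, hvmul⟩ := hvC'
  have huC : u ∈ C := by
    rw [hC, hu]
    refine ⟨fun i => ?_, ?_⟩
    · have : (0:ℝ) ≤ (v i : ℝ) := hvnn i
      have hinv : (0:ℝ) ≤ ((d:ℝ))⁻¹ := by positivity
      simpa using mul_nonneg hinv this
    · rw [Matrix.mulVec_smul, hvmul, smul_zero]
  have huint : ∀ i, ∃ z : ℤ, u i = (z : ℝ) := by
    intro i
    obtain ⟨c, hc⟩ := hdvd i
    refine ⟨c, ?_⟩
    rw [hu]
    have : ((v i : ℝ)) = (d : ℝ) * (c : ℝ) := by exact_mod_cast congrArg (fun z : ℤ => (z : ℝ)) hc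
    simp only [Pi.smul_apply, smul_eq_mul, this]
    field_simp
  have hfu : 0 < f u := by
    rw [hu, map_smul]
    have : (0:ℝ) < ((d:ℝ))⁻¹ := by positivity
    simpa using mul_pos this hfv
  refine ⟨huC, huint, hfu, ?_⟩
  rintro ⟨x, y, hxC, hyC, hxZ, hyZ, hxne, hyne, hsum⟩
  choose X hX using hxZ
  choose Y hY using hyZ
  set vq : Fin N → ℚ := fun i => ((v i : ℚ)) with hvqdef
  obtain ⟨hxnn, _⟩ := hC ▸ hxC
  obtain ⟨hynn, _⟩ := hC ▸ hyC
  -- coordinates where v vanishes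
  have hsuppx : ∀ i, v i = 0 → X i = 0 := by
    intro i hvi
    have hui : u i = 0 := by rw [hu]; simp [hvi]
    have hxy : x i + y i = 0 := by rw [← hui, hsum]; rfl
    have hxi : x i = 0 := le_antisymm (by linarith [hxnn i, hynn i]) (hxnn i)
    have : (X i : ℝ) = 0 := by rw [← hX i]; exact hxi
    exact_mod_cast this
  have hsuppy : ∀ i, v i = 0 → Y i = 0 := by
    intro i hvi
    have hui : u i = 0 := by rw [hu]; simp [hvi]
    have hxy : x i + y i = 0 := by rw [← hui, hsum]; rfl
    have hxi : x i = 0 := le_antisymm (by linarith [hxnn i, hynn i]) (hxnn i)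
    have hyi : y i = 0 := by linarith
    have : (Y i : ℝ) = 0 := by rw [← hY i]; exact hyi
    exact_mod_cast this
  -- rational versions in the cone
  have hmem : ∀ (Z : Fin N → ℤ) (z : Fin N → ℝ), (∀ i, z i = (Z i : ℝ)) → z ∈ C →
      coneQ A (fun i => ((Z i : ℚ))) := by
    intro Z z hz hzC
    apply (memC_iff A (fun i => ((Z i : ℚ)))).mp
    have : (fun i => (((Z i : ℚ) : ℝ))) = z := by
      funext i; rw [hz i]; push_cast; rfl
    rw [this, ← hC]
    exact hzC
  have hXcone := hmem X x hX hxC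
  have hYcone := hmem Y y hY hyC
  have hXne : (fun i => ((X i : ℚ))) ≠ 0 := by
    intro h0
    apply hxne
    funext i
    have := congrFun h0 i
    simp only [Pi.zero_apply] at this ⊢
    rw [hX i]
    exact_mod_cast this
  have hYne : (fun i => ((Y i : ℚ))) ≠ 0 := by
    intro h0
    apply hyne
    funext i
    have := congrFun h0 i
    simp only [Pi.zero_apply] at this ⊢
    rw [hY i]
    exact_mod_cast this
  have hXsupp : {i | (X i : ℚ) ≠ 0} ⊆ {i | v i ≠ 0} := by
    intro i hi hvi
    exact hi (by exact_mod_cast hsuppx i hvi)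
  have hYsupp : {i | (Y i : ℚ) ≠ 0} ⊆ {i | v i ≠ 0} := by
    intro i hi hvi
    exact hi (by exact_mod_cast hsuppy i hvi)
  obtain ⟨μ, hμ, hXeq⟩ := multiple A C hC f v hvC hvne hfv hmin _ hXcone hXne hXsupp
  obtain ⟨ν, hν, hYeq⟩ := multiple A C hC f v hvC hvne hfv hmin _ hYcone hYne hYsupp
  -- rational coordinate sum
  have hsumQ : ∀ i, (X i : ℚ) + (Y i : ℚ) = vq i / d := by
    intro i
    have h1 : u i = x i + y i := by rw [hsum]; rfl
    have h2 : (((X i : ℚ) + (Y i : ℚ) : ℚ) : ℝ) = (((vq i / d : ℚ)) : ℝ) := by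
      push_cast
      rw [← hX i, ← hY i, ← h1, hu]
      simp only [Pi.smul_apply, smul_eq_mul, hvqdef]
      push_cast
      field_simp
    exact_mod_cast h2
  -- get μ + ν = 1/d
  obtain ⟨i0, hi0⟩ := Function.ne_iff.mp hvne
  have hvi0 : v i0 ≠ 0 := by simpa using hi0
  have hvqi0 : vq i0 ≠ 0 := by simp [hvqdef]; exact_mod_cast hvi0
  have hsum0 : μ + ν = 1 / d := by
    have h1 : (X i0 : ℚ) = μ * vq i0 := by
      have := congrFun hXeq i0
      simpa [hvqdef] using this
    have h2 : (Y i0 : ℚ) = ν * vq i0 := by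
      have := congrFun hYeq i0
      simpa [hvqdef] using this
    have h3 := hsumQ i0
    rw [h1, h2] at h3
    have h4 : (μ + ν) * vq i0 = (1 / d) * vq i0 := by
      rw [add_mul, h3]
      ring
    exact mul_right_cancel₀ hvqi0 h4
  -- lower bound : each of μ, ν is at least 1/d
  have lb : ∀ (μ : ℚ) (X : Fin N → ℤ), 0 < μ →
      ((fun i => ((X i : ℚ))) = μ • vq) → (1:ℚ)/d ≤ μ := by
    intro μ X hμpos hXeq
    set p : ℤ := μ.num with hp
    set q : ℕ := μ.den with hq
    have hppos : 0 < p := Rat.num_pos.mpr hμpos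
    have hqdvd : ∀ i, (q : ℤ) ∣ v i := by
      intro i
      have h1 : (X i : ℚ) = μ * (v i : ℚ) := by
        have := congrFun hXeq i
        simpa [hvqdef] using this
      have h2 : (p : ℚ) * (v i : ℚ) = (X i : ℚ) * (q : ℚ) := by
        have hμeq : (p : ℚ) / (q : ℚ) = μ := Rat.num_div_den μ
        have hq0 : ((q : ℚ)) ≠ 0 := Nat.cast_ne_zero.mpr μ.den_nz
        rw [h1, ← hμeq]
        field_simp
      have h3 : p * v i = X i * (q : ℤ) := by exact_mod_cast h2
      have h4 : (q : ℤ) ∣ p * v i := ⟨X i, by rw [h3]; ring⟩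
      have h5 : q ∣ (p * v i).natAbs := Int.natAbs_dvd_natAbs.mpr (by simpa using h4)
      rw [Int.natAbs_mul] at h5
      have h6 : q ∣ (v i).natAbs :=
        (Nat.Coprime.dvd_of_dvd_mul_left (μ.reduced.symm) h5)
      exact dvd_trans (Int.natCast_dvd_natCast.mpr h6) (Int.natAbs_dvd.mpr dvd_rfl)
    have hqd : q ∣ d := by
      rw [hd]
      apply Finset.dvd_gcd
      intro i _
      exact Int.natCast_dvd_natCast.mp (Int.dvd_natAbs.mpr (hqdvd i))
    have hqled : (q : ℚ) ≤ (d : ℚ) := by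
      exact_mod_cast Nat.le_of_dvd dpos hqd
    have hqpos : (0:ℚ) < (q : ℚ) := by exact_mod_cast μ.pos
    calc (1:ℚ)/d ≤ 1/q := by
          apply one_div_le_one_div_of_le hqpos hqled
      _ ≤ (p : ℚ)/q := by
          gcongr
          exact_mod_cast hppos
      _ = μ := Rat.num_div_den μ
  have hμlb := lb μ X hμ hXeq
  have hνlb := lb ν Y hν hYeq
  have hdq : (0:ℚ) < 1/d := by positivity
  linarith
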